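/- The space of holomorphic functions f : ℂ → ℂ satisfying f(z+1) = f(z) and f(z+τ) = exp(−πinτ − 2πinz) f(z) for all z (i.e. H^0 of the line bundle L(φ₀ⁿ) on E_τ) has dimension n when n > 0, with basis given by the theta functions θ[k/n, 0](nτ, nz) for 0 ≤ k < n. -/

import Mathlib

open Complex

/-- Mumford's theta function with characteristics:
`θ[a,b](τ,z) = Σ_{m∈ℤ} exp(πiτ(m+a)² + 2πi(m+a)(z+b))`. -/
noncomputable def thetaChar (a b : ℝ) (τ z : ℂ) : ℂ :=
  ∑' m : ℤ, Complex.exp (Real.pi * I * τ * ((m : ℂ) + (a : ℂ)) ^ 2 +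
    2 * Real.pi * I * ((m : ℂ) + (a : ℂ)) * (z + (b : ℂ)))

/-- The space of global sections of the line bundle `L(φ₀ⁿ)` on `E_τ`: holomorphic
functions `f : ℂ → ℂ` with `f(z+1) = f(z)` and `f(z+τ) = exp(−πinτ − 2πinz) f(z)`. -/
def IsSectionLn (τ : ℂ) (n : ℕ) (f : ℂ → ℂ) : Prop :=
  Differentiable ℂ f ∧ (∀ z : ℂ, f (z + 1) = f z) ∧
    (∀ z : ℂ, f (z + τ) =
      Complex.exp (-(Real.pi * I * (n : ℂ) * τ) - 2 * Real.pi * I * (n : ℂ) * z) * f z)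

section SectionsLnLemmas

open MeasureTheory
open scoped Real



/-! ### The theta functions as series and basic transformation laws -/

lemma theta_series (n k : ℕ) (hn : 0 < n) (τ z : ℂ) :
    thetaChar ((k : ℝ) / (n : ℝ)) 0 ((n : ℂ) * τ) ((n : ℂ) * z) =
      ∑' m : ℤ, Complex.exp ((π : ℂ) * I * τ * ((m : ℂ) * n + k) ^ 2 / n
        + 2 * π * I * ((m : ℂ) * n + k) * z) := by
  have hn' : (n : ℂ) ≠ 0 := Nat.cast_ne_zero.mpr hn.ne'
  refine tsum_congr fun m => ?_
  congr 1
  push_cast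
  field_simp
  ring

lemma theta_jacobi (n k : ℕ) (hn : 0 < n) (τ z : ℂ) :
    thetaChar ((k : ℝ) / (n : ℝ)) 0 ((n : ℂ) * τ) ((n : ℂ) * z) =
      Complex.exp ((π : ℂ) * I * τ * (k : ℂ) ^ 2 / n + 2 * π * I * k * z) *
        jacobiTheta₂ ((n : ℂ) * z + (k : ℂ) * τ) ((n : ℂ) * τ) := by
  have hn' : (n : ℂ) ≠ 0 := Nat.cast_ne_zero.mpr hn.ne'
  rw [theta_series n k hn, jacobiTheta₂, ← tsum_mul_left]
  refine tsum_congr fun m => ?_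
  rw [jacobiTheta₂_term, ← Complex.exp_add]
  congr 1
  field_simp
  ring

lemma theta_periodic (n k : ℕ) (hn : 0 < n) (τ z : ℂ) :
    thetaChar ((k : ℝ) / (n : ℝ)) 0 ((n : ℂ) * τ) ((n : ℂ) * (z + 1)) =
      thetaChar ((k : ℝ) / (n : ℝ)) 0 ((n : ℂ) * τ) ((n : ℂ) * z) := by
  rw [theta_series n k hn, theta_series n k hn]
  refine tsum_congr fun m => ?_
  have : (π : ℂ) * I * τ * ((m : ℂ) * n + k) ^ 2 / n + 2 * π * I * ((m : ℂ) * n + k) * (z + 1)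
      = ((π : ℂ) * I * τ * ((m : ℂ) * n + k) ^ 2 / n + 2 * π * I * ((m : ℂ) * n + k) * z)
        + ((m * n + k : ℤ) : ℂ) * (2 * π * I) := by push_cast; ring
  rw [this, Complex.exp_add, Complex.exp_int_mul_two_pi_mul_I, mul_one]

lemma theta_quasi (n k : ℕ) (hn : 0 < n) (τ z : ℂ) :
    thetaChar ((k : ℝ) / (n : ℝ)) 0 ((n : ℂ) * τ) ((n : ℂ) * (z + τ)) =
      Complex.exp (-((π : ℂ) * I * n * τ) - 2 * π * I * n * z) *
        thetaChar ((k : ℝ) / (n : ℝ)) 0 ((n : ℂ) * τ) ((n : ℂ) * z) := by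
  have hn' : (n : ℂ) ≠ 0 := Nat.cast_ne_zero.mpr hn.ne'
  rw [theta_series n k hn, theta_series n k hn, ← tsum_mul_left]
  conv_rhs => rw [← (Equiv.addRight (1 : ℤ)).tsum_eq]
  refine tsum_congr fun m => ?_
  rw [← Complex.exp_add]
  congr 1
  simp only [Equiv.coe_addRight, Int.cast_add, Int.cast_one]
  field_simp
  ring

lemma theta_diff (n k : ℕ) (hn : 0 < n) {τ : ℂ} (hτ : 0 < τ.im) :
    Differentiable ℂ (fun z => thetaChar ((k : ℝ) / (n : ℝ)) 0 ((n : ℂ) * τ) ((n : ℂ) * z)) := by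
  have him : 0 < ((n : ℂ) * τ).im := by
    simp only [Complex.mul_im, Complex.natCast_re, Complex.natCast_im, zero_mul, add_zero]
    positivity
  have : (fun z => thetaChar ((k : ℝ) / (n : ℝ)) 0 ((n : ℂ) * τ) ((n : ℂ) * z)) =
      fun z => Complex.exp ((π : ℂ) * I * τ * (k : ℂ) ^ 2 / n + 2 * π * I * k * z) *
        jacobiTheta₂ ((n : ℂ) * z + (k : ℂ) * τ) ((n : ℂ) * τ) := by
    funext z; exact theta_jacobi n k hn τ z
  rw [this]
  intro z
  apply DifferentiableAt.mul
  · exact (differentiable_exp.comp (by fun_prop)).differentiableAt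
  · exact (differentiableAt_jacobiTheta₂_fst ((n : ℂ) * z + (k : ℂ) * τ) him).comp (f := fun z => (n : ℂ) * z + (k : ℂ) * τ) z (by fun_prop)

/-! ### Contour shifting and Fourier coefficients -/

/-- The `j`-th Fourier coefficient of `g` along the real line. -/
noncomputable def fc (g : ℂ → ℂ) (j : ℤ) : ℂ :=
  ∫ x in (0:ℝ)..1, Complex.exp (-(2 * π * I * j * x)) * g x

lemma integral_shift (τ : ℂ) (g : ℂ → ℂ) (hg : Differentiable ℂ g)
    (hper : ∀ z : ℂ, g (z + 1) = g z) :
    ∫ x in (0:ℝ)..1, g (x + τ) = ∫ x in (0:ℝ)..1, g x := by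
  have key : ∀ t : ℝ, ∫ x in (0:ℝ)..1, g (x + t * I) = ∫ x in (0:ℝ)..1, g x := by
    intro t
    have h := Complex.integral_boundary_rect_eq_zero_of_differentiableOn g 0
      (1 + t * I) (hg.differentiableOn)
    simp only [Complex.add_re, Complex.one_re, Complex.mul_re, Complex.I_re, Complex.ofReal_re,
      Complex.I_im, Complex.ofReal_im, Complex.add_im, Complex.one_im, Complex.mul_im,
      Complex.zero_re, Complex.zero_im, mul_zero, mul_one, zero_mul, sub_zero, zero_add, zero_sub,
      add_zero] at h
    have hvert : (∫ y in (0:ℝ)..t, g (((1:ℝ):ℂ) + y * I)) = ∫ y in (0:ℝ)..t, g (((0:ℝ):ℂ) + y * I) := by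
      refine intervalIntegral.integral_congr fun y _ => ?_
      rw [show (((1:ℝ):ℂ)) + y * I = ((((0:ℝ):ℂ)) + y * I) + 1 by push_cast; ring, hper]
    rw [hvert, add_sub_cancel_right, sub_eq_zero] at h
    rw [← h]
    refine intervalIntegral.integral_congr fun x _ => by push_cast; simp
  have hsplit : ∀ x : ℝ, (x : ℂ) + τ = ((x + τ.re : ℝ) : ℂ) + (τ.im : ℂ) * I := by
    intro x; push_cast; rw [add_assoc, Complex.re_add_im]
  set F : ℝ → ℂ := fun x => g ((x : ℂ) + (τ.im : ℂ) * I) with hF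
  have hFper : Function.Periodic F 1 := by
    intro x
    simp only [hF]
    rw [show ((x + 1 : ℝ) : ℂ) + (τ.im : ℂ) * I = ((x : ℂ) + (τ.im : ℂ) * I) + 1 by
      push_cast; ring, hper]
  calc ∫ x in (0:ℝ)..1, g (x + τ) = ∫ x in (0:ℝ)..1, F (x + τ.re) := by
        refine intervalIntegral.integral_congr fun x _ => ?_
        rw [hsplit x]
      _ = ∫ x in (0 + τ.re)..(1 + τ.re), F x := intervalIntegral.integral_comp_add_right F τ.re
      _ = ∫ x in (0:ℝ)..1, F x := by
        have := hFper.intervalIntegral_add_eq τ.re 0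
        simpa [add_comm] using this
      _ = ∫ x in (0:ℝ)..1, g x := key τ.im

lemma fc_rec (τ : ℂ) (n : ℕ) (f : ℂ → ℂ) (hf : IsSectionLn τ n f) (j : ℤ) :
    fc f (j + n) = Complex.exp ((π : ℂ) * I * n * τ + 2 * π * I * j * τ) * fc f j := by
  obtain ⟨hd, hp, hq⟩ := hf
  set g : ℂ → ℂ := fun w => Complex.exp (-(2 * π * I * j * w)) * f w with hg
  have hgd : Differentiable ℂ g := (differentiable_exp.comp (by fun_prop)).mul hd
  have hgper : ∀ z : ℂ, g (z + 1) = g z := by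
    intro z
    simp only [hg, hp z]
    congr 1
    rw [show -(2 * (π:ℂ) * I * j * (z+1)) = -(2 * π * I * j * z) + (-j : ℤ) * (2 * π * I) by
      push_cast; ring, Complex.exp_add, Complex.exp_int_mul_two_pi_mul_I, mul_one]
  have key : fc f j = Complex.exp (-((π : ℂ) * I * n * τ + 2 * π * I * j * τ)) * fc f (j + n) := by
    have h1 : fc f j = ∫ x in (0:ℝ)..1, g (x + τ) := (integral_shift τ g hgd hgper).symm
    rw [h1, fc, ← intervalIntegral.integral_const_mul]
    refine intervalIntegral.integral_congr fun x _ => ?_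
    simp only [hg, hq (x : ℂ)]
    rw [← mul_assoc, ← Complex.exp_add, ← mul_assoc, ← Complex.exp_add]
    congr 1
    push_cast
    ring
  rw [key, ← mul_assoc, ← Complex.exp_add, add_neg_cancel, Complex.exp_zero, one_mul]

lemma integral_exp_int (N : ℤ) :
    (∫ x in (0:ℝ)..1, Complex.exp (2 * π * I * N * x)) = if N = 0 then 1 else 0 := by
  rcases eq_or_ne N 0 with h | h
  · simp [h]
  · rw [if_neg h]
    have hc : (2 * (π:ℂ) * I * N) ≠ 0 := by
      simp [Real.pi_ne_zero, Complex.I_ne_zero, h]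
    rw [integral_exp_mul_complex (a := (0:ℝ)) (b := 1) hc,
      show 2 * (π:ℂ) * I * N * (1:ℝ) = N * (2 * π * I) by push_cast; ring,
      Complex.exp_int_mul_two_pi_mul_I]
    simp

lemma summable_gauss (n k : ℕ) (hn : 0 < n) {τ : ℂ} (hτ : 0 < τ.im) :
    Summable (fun m : ℤ => Real.exp (-(π * τ.im * ((m : ℝ) * n + k) ^ 2 / n))) := by
  have hT : 0 < τ.im / n := by positivity
  have base : Summable (fun j : ℤ => Real.exp (-(π * (τ.im / n) * (j : ℝ) ^ 2))) := by
    have := summable_pow_mul_jacobiTheta₂_term_bound 0 hT 0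
    refine this.congr fun j => ?_
    simp [Real.exp_eq_exp]
    ring
  have : (fun m : ℤ => Real.exp (-(π * τ.im * ((m : ℝ) * n + k) ^ 2 / n)))
      = (fun j : ℤ => Real.exp (-(π * (τ.im / n) * (j : ℝ) ^ 2))) ∘ (fun m : ℤ => m * n + k) := by
    funext m
    simp only [Function.comp_apply]
    push_cast
    congr 1
    ring
  rw [this]
  exact base.comp_injective (fun a b hab => by
    have := sub_eq_zero.mpr hab
    have h2 : (a - b) * n = 0 := by push_cast at this ⊢; linarith [this]
    rcases mul_eq_zero.mp h2 with h | h
    · linarith [sub_eq_zero.mp h, sub_eq_zero.mpr (sub_eq_zero.mp h)]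
    · exact absurd h (by exact_mod_cast hn.ne'))

lemma fc_theta (n k : ℕ) (hn : 0 < n) (hk : k < n) {τ : ℂ} (hτ : 0 < τ.im) (j : ℤ) :
    fc (fun z => thetaChar ((k : ℝ) / (n : ℝ)) 0 ((n : ℂ) * τ) ((n : ℂ) * z)) j =
      if (n : ℤ) ∣ (j - k) then Complex.exp ((π : ℂ) * I * τ * (j : ℂ) ^ 2 / n) else 0 := by
  have hn' : (n : ℂ) ≠ 0 := Nat.cast_ne_zero.mpr hn.ne'
  set G : ℤ → C(ℝ, ℂ) := fun m =>
    ⟨fun x => Complex.exp ((π : ℂ) * I * τ * ((m : ℂ) * n + k) ^ 2 / n) *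
      Complex.exp (2 * π * I * (((m : ℤ) * n + k - j : ℤ) : ℂ) * x), by fun_prop⟩ with hG
  have hpt : ∀ x : ℝ, Complex.exp (-(2 * π * I * j * x)) *
      thetaChar ((k : ℝ) / (n : ℝ)) 0 ((n : ℂ) * τ) ((n : ℂ) * x) = ∑' m : ℤ, G m x := by
    intro x
    rw [theta_series n k hn, ← tsum_mul_left]
    refine tsum_congr fun m => ?_
    simp only [hG, ContinuousMap.coe_mk]
    rw [← Complex.exp_add, ← Complex.exp_add]
    congr 1
    push_cast
    ring
  have hnorm : ∀ m : ℤ, ‖(G m).restrict (⟨Set.uIcc (0:ℝ) 1, isCompact_uIcc⟩ : TopologicalSpace.Compacts ℝ)‖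
      ≤ Real.exp (-(π * τ.im * ((m : ℝ) * n + k) ^ 2 / n)) := by
    intro m
    refine ContinuousMap.norm_le _ (Real.exp_nonneg _) |>.mpr fun x => ?_
    simp only [ContinuousMap.restrict_apply, hG, ContinuousMap.coe_mk, norm_mul]
    have h1 : ‖Complex.exp ((π : ℂ) * I * τ * ((m : ℂ) * n + k) ^ 2 / n)‖
        = Real.exp (-(π * τ.im * ((m : ℝ) * n + k) ^ 2 / n)) := by
      rw [Complex.norm_exp]
      congr 1
      have : (π : ℂ) * I * τ * ((m : ℂ) * n + k) ^ 2 / n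
          = ((π * ((m : ℝ) * n + k) ^ 2 / n : ℝ) : ℂ) * (τ * I) := by push_cast; ring
      rw [this]
      rw [Complex.re_ofReal_mul, Complex.mul_I_re]
      ring
    have h2 : ‖Complex.exp (2 * (π:ℂ) * I * (((m : ℤ) * n + k - j : ℤ) : ℂ) * x)‖ = 1 := by
      rw [Complex.norm_exp]
      have : (2 * (π:ℂ) * I * (((m : ℤ) * n + k - j : ℤ) : ℂ) * x).re = 0 := by
        have : 2 * (π:ℂ) * I * (((m : ℤ) * n + k - j : ℤ) : ℂ) * x
            = ((2 * π * (((m : ℤ) * n + k - j : ℤ) : ℝ) * x : ℝ) : ℂ) * I := by push_cast; ring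
        rw [this, Complex.mul_I_re, Complex.ofReal_im, neg_zero]
      rw [this, Real.exp_zero]
    rw [h1, h2, mul_one]
  have hsum : Summable fun m : ℤ =>
      ‖(G m).restrict (⟨Set.uIcc (0:ℝ) 1, isCompact_uIcc⟩ : TopologicalSpace.Compacts ℝ)‖ :=
    (summable_gauss n k hn hτ).of_nonneg_of_le (fun m => norm_nonneg _) hnorm
  have hint : fc (fun z => thetaChar ((k : ℝ) / (n : ℝ)) 0 ((n : ℂ) * τ) ((n : ℂ) * z)) j
      = ∑' m : ℤ, ∫ x in (0:ℝ)..1, G m x := by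
    rw [fc]
    rw [intervalIntegral.tsum_intervalIntegral_eq_of_summable_norm hsum]
    exact intervalIntegral.integral_congr fun x _ => (hpt x)
  rw [hint]
  have hev : ∀ m : ℤ, (∫ x in (0:ℝ)..1, G m x)
      = Complex.exp ((π : ℂ) * I * τ * ((m : ℂ) * n + k) ^ 2 / n) *
        (if ((m : ℤ) * n + k - j : ℤ) = 0 then 1 else 0) := by
    intro m
    simp only [hG, ContinuousMap.coe_mk]
    rw [intervalIntegral.integral_const_mul, integral_exp_int]
  simp_rw [hev]
  rcases em ((n : ℤ) ∣ (j - k)) with hdvd | hdvd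
  · obtain ⟨m₀, hm₀⟩ := hdvd
    have hj : (m₀ * n + k : ℤ) = j := by linear_combination -hm₀
    have hm₀' : (m₀ * n + k - j : ℤ) = 0 := by linear_combination -hm₀
    rw [if_pos ⟨m₀, hm₀⟩]
    rw [tsum_eq_single m₀]
    · rw [if_pos hm₀', mul_one]
      congr 1
      have : ((m₀ : ℂ) * n + k) = (j : ℂ) := by rw [← hj]; push_cast; ring
      rw [this]
    · intro m hm
      rw [if_neg, mul_zero]
      intro hcon
      apply hm
      have : (m * n : ℤ) = m₀ * n := by linear_combination hcon - hm₀'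
      exact mul_right_cancel₀ (by exact_mod_cast hn.ne' : (n:ℤ) ≠ 0) this
  · rw [if_neg hdvd]
    rw [tsum_eq_single 0]
    · rw [if_neg, mul_zero]
      intro hcon
      exact hdvd ⟨0, by linear_combination -hcon⟩
    · intro m hm
      rw [if_neg, mul_zero]
      intro hcon
      exact hdvd ⟨m, by linear_combination -hcon⟩

lemma vanish (g : ℂ → ℂ) (hg : Differentiable ℂ g) (hper : ∀ z : ℂ, g (z + 1) = g z)
    (hfc : ∀ j : ℤ, fc g j = 0) : g = 0 := by
  haveI : Fact (0 < (1:ℝ)) := ⟨one_pos⟩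
  have hperR : Function.Periodic (fun x : ℝ => g x) 1 := by
    intro x
    simp only [Complex.ofReal_add, Complex.ofReal_one]
    exact hper x
  set u : AddCircle 1 → ℂ := hperR.lift with hu
  have hucont : Continuous u :=
    continuous_coinduced_dom.mpr (hg.continuous.comp Complex.continuous_ofReal)
  have hcoeff : ∀ j : ℤ, fourierCoeff u j = 0 := by
    intro j
    rw [fourierCoeff_eq_intervalIntegral u j 0]
    simp only [zero_add, div_one, one_smul]
    rw [← hfc j, fc]
    refine intervalIntegral.integral_congr fun x _ => ?_
    rw [fourier_coe_apply]
    simp only [hu, Function.Periodic.lift_coe, smul_eq_mul]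
    congr 2
    push_cast
    ring
  let U : C(AddCircle (1:ℝ), ℂ) := ⟨u, hucont⟩
  let UL : Lp ℂ 2 (@AddCircle.haarAddCircle (1:ℝ) _) := ContinuousMap.toLp 2 _ ℂ U
  have hUL : ∀ j : ℤ, fourierCoeff (⇑UL) j = 0 := by
    intro j
    rw [← hcoeff j, fourierCoeff, fourierCoeff]
    refine integral_congr_ae ?_
    filter_upwards [ContinuousMap.coeFn_toLp (p := 2) (μ := @AddCircle.haarAddCircle (1:ℝ) _) (𝕜 := ℂ) U] with t ht
    rw [ht]
    rfl
  have hrepr : fourierBasis.repr UL = 0 := by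
    ext j
    rw [fourierBasis_repr UL j, hUL j]
    rfl
  have hUL0 : UL = 0 := (LinearIsometryEquiv.map_eq_zero_iff _).mp hrepr
  have hae : u =ᵐ[@AddCircle.haarAddCircle (1:ℝ) _] 0 := by
    have h1 : (⇑UL : AddCircle (1:ℝ) → ℂ) =ᵐ[@AddCircle.haarAddCircle (1:ℝ) _] u :=
      ContinuousMap.coeFn_toLp (p := 2) _ U
    have h2 : (⇑UL : AddCircle (1:ℝ) → ℂ) =ᵐ[@AddCircle.haarAddCircle (1:ℝ) _] 0 := by
      rw [hUL0]; exact Lp.coeFn_zero _ _ _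
    exact h1.symm.trans h2
  have hu0 : u = 0 := (Continuous.ae_eq_iff_eq _ hucont continuous_const).mp hae
  have hR : ∀ x : ℝ, g x = 0 := by
    intro x
    have : u x = 0 := by rw [hu0]; rfl
    rwa [hu, Function.Periodic.lift_coe] at this
  have han : AnalyticOnNhd ℂ g Set.univ := analyticOnNhd_univ_iff_differentiable.mpr hg
  have hfreq : ∃ᶠ z in nhdsWithin (0:ℂ) {(0:ℂ)}ᶜ, g z = 0 := by
    have htend : Filter.Tendsto (fun m : ℕ => ((1 / (m + 1) : ℝ) : ℂ)) Filter.atTop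
        (nhdsWithin (0:ℂ) {(0:ℂ)}ᶜ) := by
      rw [tendsto_nhdsWithin_iff]
      constructor
      · rw [show (0:ℂ) = ((0:ℝ):ℂ) by norm_num]
        exact (Complex.continuous_ofReal.tendsto (0:ℝ)).comp
          tendsto_one_div_add_atTop_nhds_zero_nat
      · refine Filter.Eventually.of_forall fun m => ?_
        simp only [Set.mem_compl_iff, Set.mem_singleton_iff]
        intro hcon
        rw [Complex.ofReal_eq_zero] at hcon
        have hp : (0:ℝ) < 1 / (m + 1) := by positivity
        rw [hcon] at hp
        exact lt_irrefl _ hp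
    exact htend.frequently (Filter.Frequently.of_forall fun m => hR _)
  have := han.eqOn_zero_of_preconnected_of_frequently_eq_zero isPreconnected_univ
    (Set.mem_univ (0:ℂ)) hfreq
  funext z
  exact this (Set.mem_univ z)

lemma fc_shift (τ : ℂ) (n : ℕ) (hn : 0 < n) (f : ℂ → ℂ) (hf : IsSectionLn τ n f) (r : ℤ)
    (m : ℤ) : fc f (m * n + r) =
      Complex.exp ((π : ℂ) * I * τ * (((m * n + r : ℤ) : ℂ) ^ 2 - (r : ℂ) ^ 2) / n) * fc f r := by
  have hn' : (n : ℂ) ≠ 0 := Nat.cast_ne_zero.mpr hn.ne'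
  induction m using Int.induction_on with
  | zero => norm_num
  | succ i ih =>
    have h1 : ((i : ℤ) + 1) * n + r = (i * n + r) + n := by ring
    rw [h1, fc_rec τ n f hf (i * n + r), ih, ← mul_assoc, ← Complex.exp_add]
    congr 2
    push_cast
    field_simp
    ring
  | pred i ih =>
    have h2 := fc_rec τ n f hf ((-(i : ℤ) - 1) * n + r)
    have h3 : (-(i : ℤ) - 1) * n + r + n = (-(i : ℤ)) * n + r := by ring
    rw [h3, ih] at h2
    set A : ℂ := (π : ℂ) * I * τ * ((((-(i:ℤ)) * n + r : ℤ) : ℂ) ^ 2 - (r : ℂ) ^ 2) / n with hA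
    set B : ℂ := (π : ℂ) * I * n * τ + 2 * π * I * ((-(i:ℤ) - 1) * n + r : ℤ) * τ with hB
    have key : fc f ((-(i : ℤ) - 1) * n + r) = Complex.exp (A - B) * fc f r := by
      rw [Complex.exp_sub, div_mul_eq_mul_div, eq_div_iff (Complex.exp_ne_zero B)]
      linear_combination -h2
    rw [key]
    congr 2
    rw [hA, hB]
    push_cast
    field_simp
    ring

lemma key_dvd (n : ℕ) (hn : 0 < n) (j : ℤ) (k : ℕ) (hk : k < n)
    (h : (n : ℤ) ∣ j - k) : (k : ℤ) = j % n := by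
  obtain ⟨t, ht⟩ := h
  have hj : j = (k : ℤ) + n * t := by linarith
  rw [hj, Int.add_mul_emod_self_left, Int.emod_eq_of_lt (by positivity) (by exact_mod_cast hk)]

lemma fc_combo (n : ℕ) (f : ℂ → ℂ) (hf : Continuous f) (Θ : Fin n → ℂ → ℂ)
    (hΘ : ∀ k, Continuous (Θ k)) (c : Fin n → ℂ) (j : ℤ) :
    fc (fun z => f z - ∑ k, c k * Θ k z) j = fc f j - ∑ k, c k * fc (Θ k) j := by
  rw [fc]
  have hpt : ∀ x : ℝ, Complex.exp (-(2 * π * I * j * x)) * (f x - ∑ k, c k * Θ k x)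
      = Complex.exp (-(2 * π * I * j * x)) * f x
        - ∑ k, c k * (Complex.exp (-(2 * π * I * j * x)) * Θ k x) := by
    intro x
    rw [mul_sub, Finset.mul_sum]
    congr 1
    refine Finset.sum_congr rfl fun k _ => by ring
  simp_rw [hpt]
  rw [intervalIntegral.integral_sub, intervalIntegral.integral_finset_sum]
  · congr 1
    refine Finset.sum_congr rfl fun k _ => ?_
    rw [intervalIntegral.integral_const_mul]
    rfl
  · exact fun k _ => (Continuous.intervalIntegrable (by fun_prop) _ _)
  · exact Continuous.intervalIntegrable (by fun_prop) _ _
  · refine Continuous.intervalIntegrable ?_ _ _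
    refine continuous_finset_sum _ fun k _ => ?_
    fun_prop


end SectionsLnLemmas

open scoped Real in
/-- **`H^0(L(φ₀ⁿ))` has dimension `n`, with basis the theta functions
`θ[k/n, 0](nτ, nz)`, `0 ≤ k < n`.**  Each of these theta functions is a section, they are
linearly independent, and every section is a (unique) linear combination of them. -/
theorem sections_Ln_basis_theta (τ : ℂ) (hτ : 0 < τ.im) (n : ℕ) (hn : 0 < n) :
    (∀ k : Fin n, IsSectionLn τ n
      (fun z => thetaChar ((k : ℝ) / (n : ℝ)) 0 ((n : ℂ) * τ) ((n : ℂ) * z))) ∧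
    LinearIndependent ℂ
      (fun (k : Fin n) => (fun z => thetaChar ((k : ℝ) / (n : ℝ)) 0 ((n : ℂ) * τ)
        ((n : ℂ) * z) : ℂ → ℂ)) ∧
    (∀ f : ℂ → ℂ, IsSectionLn τ n f → ∃ c : Fin n → ℂ,
      f = fun z => ∑ k : Fin n, c k *
        thetaChar ((k : ℝ) / (n : ℝ)) 0 ((n : ℂ) * τ) ((n : ℂ) * z)) := by
  have hn' : (n : ℂ) ≠ 0 := Nat.cast_ne_zero.mpr hn.ne'
  set Θ : Fin n → ℂ → ℂ :=
    fun k => (fun z => thetaChar ((k : ℝ) / (n : ℝ)) 0 ((n : ℂ) * τ) ((n : ℂ) * z)) with hΘ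
  have hsec : ∀ k : Fin n, IsSectionLn τ n (Θ k) := by
    intro k
    exact ⟨theta_diff n k hn hτ, fun z => theta_periodic n k hn τ z,
      fun z => theta_quasi n k hn τ z⟩
  have hΘcont : ∀ k : Fin n, Continuous (Θ k) := fun k => (theta_diff n k hn hτ).continuous
  have hfcΘ : ∀ (k : Fin n) (j : ℤ), fc (Θ k) j =
      if (n : ℤ) ∣ (j - (k : ℕ)) then Complex.exp ((π : ℂ) * I * τ * (j : ℂ) ^ 2 / n) else 0 :=
    fun k j => fc_theta n k hn k.isLt hτ j
  -- if `k ≠ k'` in `Fin n` then `¬ n ∣ k' - k`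
  have hndvd : ∀ (k k' : Fin n), k ≠ k' → ¬ (n : ℤ) ∣ (((k' : ℕ) : ℤ) - (k : ℕ)) := by
    intro k k' hne hdvd
    have h1 : ((k : ℕ) : ℤ) = ((k' : ℕ) : ℤ) % n := key_dvd n hn _ _ k.isLt hdvd
    have h2 : (((k' : ℕ) : ℤ)) % n = ((k' : ℕ) : ℤ) :=
      Int.emod_eq_of_lt (by positivity) (by exact_mod_cast k'.isLt)
    exact hne (Fin.ext (by omega))
  refine ⟨hsec, ?_, ?_⟩
  · -- linear independence
    rw [Fintype.linearIndependent_iff]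
    intro g hg k₀
    have h0 : (fun z => (0:ℂ) - ∑ k, g k * Θ k z) = (fun _ => (0:ℂ)) := by
      funext z
      have := congrFun hg z
      simp only [Finset.sum_apply, Pi.smul_apply, smul_eq_mul, Pi.zero_apply] at this
      simp [this]
    have hz : fc (fun _ => (0:ℂ)) ((k₀ : ℕ) : ℤ) = 0 := by
      simp [fc]
    rw [← h0] at hz
    rw [fc_combo n (fun _ => (0:ℂ)) continuous_const Θ hΘcont g] at hz
    have hz0 : fc (fun _ => (0:ℂ)) ((k₀ : ℕ) : ℤ) = 0 := by simp [fc]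
    rw [hz0, zero_sub, neg_eq_zero] at hz
    rw [Finset.sum_eq_single k₀] at hz
    · rw [hfcΘ k₀, if_pos (by simp)] at hz
      exact (mul_eq_zero.mp hz).resolve_right (Complex.exp_ne_zero _)
    · intro k _ hk
      rw [hfcΘ k, if_neg (hndvd k k₀ hk), mul_zero]
    · intro h
      exact absurd (Finset.mem_univ k₀) h
  · -- spanning
    intro f hf
    set c : Fin n → ℂ :=
      fun k => Complex.exp (-((π : ℂ) * I * τ * ((k : ℕ) : ℂ) ^ 2 / n)) * fc f ((k : ℕ) : ℤ)
      with hc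
    set g : ℂ → ℂ := fun z => f z - ∑ k, c k * Θ k z with hgdef
    have hgdiff : Differentiable ℂ g := by
      apply hf.1.sub
      apply Differentiable.fun_sum
      intro k _
      exact (theta_diff n k hn hτ).const_mul (c k)
    have hgper : ∀ z : ℂ, g (z + 1) = g z := by
      intro z
      simp only [hgdef]
      rw [hf.2.1 z]
      congr 1
      exact Finset.sum_congr rfl fun k _ => by simp only [hΘ]; rw [theta_periodic n k hn τ z]
    have hfcg : ∀ j : ℤ, fc g j = 0 := by
      intro j
      rw [hgdef, fc_combo n f hf.1.continuous Θ hΘcont c j]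
      set r : ℤ := j % n with hr
      have hr0 : 0 ≤ r := Int.emod_nonneg j (by exact_mod_cast hn.ne')
      have hrn : r < n := Int.emod_lt_of_pos j (by exact_mod_cast hn)
      have hjr : (j / n) * n + r = j := by
        have := Int.mul_ediv_add_emod j n
        linarith
      have h1 : fc f j = Complex.exp ((π : ℂ) * I * τ * ((j : ℂ) ^ 2 - (r : ℂ) ^ 2) / n)
          * fc f r := by
        have := fc_shift τ n hn f hf r (j / n)
        rw [hjr] at this
        exact this
      set r' : Fin n := ⟨r.toNat, by omega⟩ with hr'
      have hrv : (((r' : ℕ) : ℤ)) = r := Int.toNat_of_nonneg hr0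
      have hrdvd : (n : ℤ) ∣ j - ((r' : ℕ) : ℤ) := by
        rw [hrv]
        exact ⟨j / n, by linarith [Int.mul_ediv_add_emod j n]⟩
      have hsumv : ∑ k, c k * fc (Θ k) j
          = c r' * Complex.exp ((π : ℂ) * I * τ * (j : ℂ) ^ 2 / n) := by
        rw [Finset.sum_eq_single r']
        · rw [hfcΘ r', if_pos hrdvd]
        · intro k _ hk
          rw [hfcΘ k, if_neg, mul_zero]
          intro hdvd
          apply hk
          have h1 : ((k : ℕ) : ℤ) = j % n := key_dvd n hn j k k.isLt hdvd
          apply Fin.ext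
          omega
        · intro h
          exact absurd (Finset.mem_univ r') h
      rw [h1, hsumv, hc]
      simp only
      have hcast : (((r' : ℕ) : ℂ)) = ((r : ℤ) : ℂ) := by exact_mod_cast congrArg Int.cast hrv
      rw [hcast, hrv]
      rw [sub_eq_zero, show Complex.exp ((π:ℂ) * I * τ * ((j:ℂ) ^ 2 - (r:ℂ) ^ 2) / n)
          = Complex.exp (-((π:ℂ) * I * τ * (r:ℂ) ^ 2 / n)) *
            Complex.exp ((π:ℂ) * I * τ * (j:ℂ) ^ 2 / n) from by
        rw [← Complex.exp_add]; congr 1; field_simp; ring]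
      ring
    have hg0 := vanish g hgdiff hgper hfcg
    refine ⟨c, ?_⟩
    funext z
    have := congrFun hg0 z
    simp only [hgdef, Pi.zero_apply] at this
    have := sub_eq_zero.mp this
    exact this
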